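/- Let Y = ⊕_{i∈I} ℚ be a direct sum of copies of ℚ over a linearly ordered index set I. If u, v ∈ Y satisfy that 2u, 2v, and u + v all have the same profile (the ordered finite sequence of nonzero coordinates), then u = v. -/

import Mathlib

/-- The profile of an element of `⊕_{i ∈ I} ℚ`: its nonzero coordinates in increasing
order of index. -/
noncomputable def profileQ {I : Type*} [LinearOrder I] (u : I →₀ ℚ) : List ℚ :=
  letI := Classical.decEq I
  (u.support.sort (· ≤ ·)).map u

section aux
variable {I : Type*} [LinearOrder I]

open Finset in
lemma sort_erase_max [DecidableEq I] {s : Finset I} {m : I} (hm : m ∈ s)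
    (hmax : ∀ j ∈ s, j ≤ m) :
    s.sort (· ≤ ·) = ((s.erase m).sort (· ≤ ·)) ++ [m] := by
  refine (fun hp hs => List.Perm.eq_of_pairwise' (s.pairwise_sort _) hs hp) ?_ ?_
  · rw [← Multiset.coe_eq_coe, ← Multiset.coe_add, Finset.sort_eq, Finset.sort_eq,
      Finset.erase_val, add_comm, Multiset.coe_singleton, Multiset.singleton_add,
      Multiset.cons_erase (by simpa using hm : m ∈ s.val)]
  · rw [List.pairwise_append]
    refine ⟨Finset.pairwise_sort _ _, List.pairwise_singleton _ m, ?_⟩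
    intro x hx y hy
    simp only [List.mem_singleton] at hy
    subst hy
    exact hmax x (Finset.mem_erase.mp ((Finset.mem_sort _).mp hx)).2

lemma profileQ_split (u : I →₀ ℚ) {m : I} (hm : u m ≠ 0)
    (hmax : ∀ j ∈ u.support, j ≤ m) :
    profileQ u = profileQ (u.erase m) ++ [u m] := by
  classical
  unfold profileQ
  rw [sort_erase_max (Finsupp.mem_support_iff.mpr hm) hmax, List.map_append,
    Finsupp.support_erase, List.map_singleton]
  congr 1
  apply List.map_congr_left
  intro j hj
  have hj' := (Finset.mem_sort _).mp hj
  rw [Finsupp.erase_apply, if_neg (Finset.mem_erase.mp hj').1]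

lemma two_smul_apply (u : I →₀ ℚ) (i : I) : ((2 : ℕ) • u) i = 2 * u i := by
  simp

lemma support_two_smul (u : I →₀ ℚ) : ((2 : ℕ) • u).support = u.support := by
  classical
  ext i
  simp [Finsupp.mem_support_iff]

lemma length_profileQ (u : I →₀ ℚ) : (profileQ u).length = u.support.card := by
  classical
  unfold profileQ
  rw [List.length_map, Finset.length_sort]

lemma erase_two_smul (u : I →₀ ℚ) (m : I) :
    ((2 : ℕ) • u).erase m = (2 : ℕ) • (u.erase m) := by
  classical
  ext i
  rw [Finsupp.erase_apply]
  by_cases h : i = m <;> simp [Finsupp.erase_apply, h]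

lemma key : ∀ n : ℕ, ∀ u v : I →₀ ℚ, (u.support ∪ v.support).card ≤ n →
    profileQ ((2 : ℕ) • u) = profileQ ((2 : ℕ) • v) →
    profileQ ((2 : ℕ) • v) = profileQ (u + v) → u = v := by
  classical
  intro n
  induction n with
  | zero =>
    intro u v hc _ _
    rw [Nat.le_zero, Finset.card_eq_zero, Finset.union_eq_empty] at hc
    rw [Finsupp.support_eq_empty.mp hc.1, Finsupp.support_eq_empty.mp hc.2]
  | succ n ih =>
    intro u v hc h1 h2
    rcases eq_or_ne (u.support ∪ v.support) ∅ with he | he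
    · rw [Finset.union_eq_empty] at he
      rw [Finsupp.support_eq_empty.mp he.1, Finsupp.support_eq_empty.mp he.2]
    have hne : (u.support ∪ v.support).Nonempty := Finset.nonempty_iff_ne_empty.mpr he
    set m := (u.support ∪ v.support).max' hne with hmdef
    have hmem := (u.support ∪ v.support).max'_mem hne
    have hmaxu : ∀ j ∈ u.support, j ≤ m := fun j hj =>
      Finset.le_max' _ j (Finset.mem_union_left _ hj)
    have hmaxv : ∀ j ∈ v.support, j ≤ m := fun j hj =>
      Finset.le_max' _ j (Finset.mem_union_right _ hj)
    have hmaxuv : ∀ j ∈ (u + v).support, j ≤ m := fun j hj =>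
      Finset.le_max' _ j (Finset.union_subset_union (subset_refl _) (subset_refl _)
        (Finsupp.support_add hj))
    have hmax2u : ∀ j ∈ ((2 : ℕ) • u).support, j ≤ m := by
      rw [support_two_smul]; exact hmaxu
    have hmax2v : ∀ j ∈ ((2 : ℕ) • v).support, j ≤ m := by
      rw [support_two_smul]; exact hmaxv
    -- case analysis
    by_cases hu : u m = 0 <;> by_cases hv : v m = 0
    · exfalso
      rcases Finset.mem_union.mp hmem with h | h <;>
        simp [Finsupp.mem_support_iff, hu, hv, ← hmdef] at h
    · -- u m = 0, v m ≠ 0 : contradiction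
      exfalso
      -- u nonempty since card supports equal
      have hcard : u.support.card = v.support.card := by
        have := congrArg List.length h1
        rwa [length_profileQ, length_profileQ, support_two_smul, support_two_smul] at this
      have hune : u.support.Nonempty := by
        rw [← Finset.card_pos, hcard, Finset.card_pos]
        exact ⟨m, Finsupp.mem_support_iff.mpr hv⟩
      set m' := u.support.max' hune with hm'def
      have hm'mem := u.support.max'_mem hune
      have hum' : u m' ≠ 0 := Finsupp.mem_support_iff.mp hm'mem
      have s2u : profileQ ((2 : ℕ) • u) = profileQ (((2:ℕ)•u).erase m') ++ [2 * u m'] := by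
        rw [← two_smul_apply]
        exact profileQ_split _ (by rw [two_smul_apply]; simpa using hum')
          (by rw [support_two_smul]; exact fun j hj => u.support.le_max' j hj)
      have s2v : profileQ ((2 : ℕ) • v) = profileQ (((2:ℕ)•v).erase m) ++ [2 * v m] := by
        rw [← two_smul_apply]
        exact profileQ_split _ (by rw [two_smul_apply]; simpa using hv) hmax2v
      have huvm : (u + v) m ≠ 0 := by simp [hu, hv]
      have suv : profileQ (u + v) = profileQ ((u+v).erase m) ++ [u m + v m] := by
        have := profileQ_split (u + v) huvm hmaxuv
        simpa using this
      rw [s2u, s2v] at h1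
      rw [s2v, suv] at h2
      have e1 : 2 * u m' = 2 * v m := by
        have := (List.append_inj' h1 rfl).2
        simpa using this
      have e2 : 2 * v m = u m + v m := by
        have := (List.append_inj' h2 rfl).2
        simpa using this
      rw [hu, zero_add] at e2
      have : v m = 0 := by linarith
      exact hv this
    · -- u m ≠ 0, v m = 0 : contradiction (symmetric)
      exfalso
      have hcard : u.support.card = v.support.card := by
        have := congrArg List.length h1
        rwa [length_profileQ, length_profileQ, support_two_smul, support_two_smul] at this
      have hvne : v.support.Nonempty := by
        rw [← Finset.card_pos, ← hcard, Finset.card_pos]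
        exact ⟨m, Finsupp.mem_support_iff.mpr hu⟩
      set m' := v.support.max' hvne with hm'def
      have hm'mem := v.support.max'_mem hvne
      have hvm' : v m' ≠ 0 := Finsupp.mem_support_iff.mp hm'mem
      have s2u : profileQ ((2 : ℕ) • u) = profileQ (((2:ℕ)•u).erase m) ++ [2 * u m] := by
        rw [← two_smul_apply]
        exact profileQ_split _ (by rw [two_smul_apply]; simpa using hu) hmax2u
      have s2v : profileQ ((2 : ℕ) • v) = profileQ (((2:ℕ)•v).erase m') ++ [2 * v m'] := by
        rw [← two_smul_apply]
        exact profileQ_split _ (by rw [two_smul_apply]; simpa using hvm')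
          (by rw [support_two_smul]; exact fun j hj => v.support.le_max' j hj)
      have huvm : (u + v) m ≠ 0 := by simp [hu, hv]
      have suv : profileQ (u + v) = profileQ ((u+v).erase m) ++ [u m + v m] := by
        have := profileQ_split (u + v) huvm hmaxuv
        simpa using this
      rw [s2u, s2v] at h1
      rw [s2v, suv] at h2
      have e1 : 2 * u m = 2 * v m' := by
        have := (List.append_inj' h1 rfl).2
        simpa using this
      have e2 : 2 * v m' = u m + v m := by
        have := (List.append_inj' h2 rfl).2
        simpa using this
      rw [hv, add_zero] at e2
      have : u m = 0 := by linarith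
      exact hu this
    · -- both nonzero: peel off m and use IH
      have s2u : profileQ ((2 : ℕ) • u) = profileQ ((2:ℕ) • u.erase m) ++ [2 * u m] := by
        rw [← erase_two_smul, ← two_smul_apply]
        exact profileQ_split _ (by rw [two_smul_apply]; simpa using hu) hmax2u
      have s2v : profileQ ((2 : ℕ) • v) = profileQ ((2:ℕ) • v.erase m) ++ [2 * v m] := by
        rw [← erase_two_smul, ← two_smul_apply]
        exact profileQ_split _ (by rw [two_smul_apply]; simpa using hv) hmax2v
      rw [s2u, s2v] at h1
      have euv : u m = v m := by
        have := (List.append_inj' h1 rfl).2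
        simp only [List.cons.injEq, and_true] at this
        linarith
      have huvm : (u + v) m ≠ 0 := by
        have h := hu
        rw [Finsupp.add_apply, euv]
        intro hcon
        apply hv
        linarith
      have suv : profileQ (u + v) = profileQ (u.erase m + v.erase m) ++ [(u + v) m] := by
        have := profileQ_split (u + v) huvm hmaxuv
        rwa [Finsupp.erase_add] at this
      rw [s2v, suv] at h2
      have h1' := (List.append_inj' h1 rfl).1
      have h2' := (List.append_inj' h2 rfl).1
      have hcard : ((u.erase m).support ∪ (v.erase m).support).card ≤ n := by
        rw [Finsupp.support_erase, Finsupp.support_erase, ← Finset.erase_union_distrib]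
        have hlt : ((u.support ∪ v.support).erase m).card < (u.support ∪ v.support).card :=
          Finset.card_erase_lt_of_mem hmem
        omega
      have heq := ih (u.erase m) (v.erase m) hcard h1' h2'
      ext i
      rcases eq_or_ne i m with rfl | hi
      · exact euv
      · have := DFunLike.congr_fun heq i
        simpa [Finsupp.erase_apply, hi] using this
end aux

/-- in a direct sum of copies of `ℚ`, if `2u`, `2v`, `u + v` all have the
same profile then `u = v`. -/
theorem stmt_16 {I : Type*} [LinearOrder I] (u v : I →₀ ℚ)
    (h1 : profileQ ((2 : ℕ) • u) = profileQ ((2 : ℕ) • v))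
    (h2 : profileQ ((2 : ℕ) • v) = profileQ (u + v)) :
    u = v := by
  exact key (u.support ∪ v.support).card u v le_rfl h1 h2
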